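/- Let ω ∈ 𝕋 with associated data (I, J, L, L′, M, M′, σ); write M = {m₁ < … < m_t}, J = {j₁ < … < j_k}, L′ = {ℓ′₁ < … < ℓ′_{s′}}. Set R = {−t,…,−1} ∪ I ∪ L′ and S = J ∪ M ∪ {q+1,…,q+s′}, viewed as finite subsets of ℤ (the elements of I, L′ lying in {1,…,p} and those of J, M in {1,…,q}), and let w : S → R be the bijection with w(m_i) = −i for 1 ≤ i ≤ t, w(j) = σ(j) for j ∈ J, and w(q+i) = ℓ′_{s′+1−i} for 1 ≤ i ≤ s′; let P_w be the R×S matrix with (P_w)_{ρ,ς} = 1 if ρ = w(ς) and 0 otherwise. Let ς be the (I∪L′)×(J∪M) matrix with ς_{i,j} = 1 if j ∈ J and i = σ(j) and 0 otherwise, let Γ be the space of matrices γ indexed by (J∪M)×(I∪L′) such that ςγ and γς are strictly upper triangular, and let η₂(γ) be the S×R matrix extending γ by zero. Then η₂ restricts to a linear bijection from Γ onto the set Z = {z ∈ Mat_{S×R}(ℂ) : P_w z and z P_w are strictly upper triangular}. Moreover, for every γ ∈ Γ with z = η₂(γ) and every ℓ ≥ 0, η₂((γς)^ℓ γ) = (z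 P_w)^ℓ z. -/

import Mathlib

open scoped Classical
open Matrix

noncomputable section

/-- A partial permutation matrix: entries in `{0,1}`, at most one `1` in each row
and in each column. -/
def IsPartialPerm {m n : ℕ} (τ : Matrix (Fin m) (Fin n) ℂ) : Prop :=
  (∀ i j, τ i j = 0 ∨ τ i j = 1) ∧
  (∀ i j j', τ i j = 1 → τ i j' = 1 → j = j') ∧
  (∀ i i' j, τ i j = 1 → τ i' j = 1 → i = i')

/-- `(p+q) × r` complex matrices, rows indexed by `Fin p ⊕ Fin q`. -/
abbrev MatT (p q r : ℕ) := Matrix (Fin p ⊕ Fin q) (Fin r) ℂ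

/-- The set `𝕋`: `(p+q) × r` matrices of rank `r` whose top `p × r` and bottom
`q × r` blocks are partial permutation matrices. -/
def InT {p q r : ℕ} (ω : MatT p q r) : Prop :=
  ω.rank = r ∧
  IsPartialPerm (Matrix.of fun (i : Fin p) (c : Fin r) => ω (Sum.inl i) c) ∧
  IsPartialPerm (Matrix.of fun (j : Fin q) (c : Fin r) => ω (Sum.inr j) c)

/-- The permutation matrix of `w`: `(P_w)_{i,j} = 1` iff `i = w j`. -/
def permMat {r : ℕ} (w : Equiv.Perm (Fin r)) : Matrix (Fin r) (Fin r) ℂ :=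
  Matrix.of fun i j => if i = w j then 1 else 0

/-- `[ω]`, the column space of `ω`, as a subspace of `ℂ^{p+q}`. -/
def colSpace {p q r : ℕ} (ω : MatT p q r) : Submodule ℂ (Fin p ⊕ Fin q → ℂ) :=
  LinearMap.range ω.mulVecLin

/-- `i ∈ I`: some column of `ω` has a `1` in row `i` (top block) and a `1` in some
bottom row. -/
def memI {p q r : ℕ} (ω : MatT p q r) (i : Fin p) : Prop :=
  ∃ c, ω (Sum.inl i) c = 1 ∧ ∃ j : Fin q, ω (Sum.inr j) c = 1

/-- `i ∈ L`: some column of `ω` has a `1` in row `i` (top block) and no other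
nonzero entry. -/
def memL {p q r : ℕ} (ω : MatT p q r) (i : Fin p) : Prop :=
  ∃ c, ω (Sum.inl i) c = 1 ∧ ∀ k, k ≠ Sum.inl i → ω k c = 0

/-- `i ∈ L'`: row `i` of the top block is zero. -/
def memL' {p q r : ℕ} (ω : MatT p q r) (i : Fin p) : Prop :=
  ∀ c, ω (Sum.inl i) c = 0

/-- `j ∈ J`: some column of `ω` has a `1` in row `p+j` and a `1` in some top row. -/
def memJ {p q r : ℕ} (ω : MatT p q r) (j : Fin q) : Prop :=
  ∃ c, ω (Sum.inr j) c = 1 ∧ ∃ i : Fin p, ω (Sum.inl i) c = 1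

/-- `j ∈ M`: some column of `ω` has a `1` in row `p+j` and no other nonzero entry. -/
def memM {p q r : ℕ} (ω : MatT p q r) (j : Fin q) : Prop :=
  ∃ c, ω (Sum.inr j) c = 1 ∧ ∀ k, k ≠ Sum.inr j → ω k c = 0

/-- `j ∈ M'`: row `p+j` of `ω` (i.e. row `j` of the bottom block) is zero. -/
def memM' {p q r : ℕ} (ω : MatT p q r) (j : Fin q) : Prop :=
  ∀ c, ω (Sum.inr j) c = 0

/-- The conormal direction `D_ω`: block matrices `(a b; c d)` with `a, d` strictly
upper triangular, column space contained in `[ω]`, and `[ω]` contained in the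
kernel. -/
def Dset {p q r : ℕ} (ω : MatT p q r) :
    Set (Matrix (Fin p ⊕ Fin q) (Fin p ⊕ Fin q) ℂ) :=
  {x | (∀ i j : Fin p, j ≤ i → x (Sum.inl i) (Sum.inl j) = 0) ∧
       (∀ i j : Fin q, j ≤ i → x (Sum.inr i) (Sum.inr j) = 0) ∧
       LinearMap.range x.mulVecLin ≤ colSpace ω ∧
       colSpace ω ≤ LinearMap.ker x.mulVecLin}

/-- The index set `I ∪ L'` (as a subtype of `Fin p`). -/
def IUL' {p q r : ℕ} (ω : MatT p q r) := {i : Fin p // memI ω i ∨ memL' ω i}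

/-- The index set `J ∪ M` (as a subtype of `Fin q`). -/
def JUM {p q r : ℕ} (ω : MatT p q r) := {j : Fin q // memJ ω j ∨ memM ω j}

instance {p q r : ℕ} (ω : MatT p q r) : Finite (IUL' ω) := by
  unfold IUL'; infer_instance

instance {p q r : ℕ} (ω : MatT p q r) : Finite (JUM ω) := by
  unfold JUM; infer_instance

noncomputable instance {p q r : ℕ} (ω : MatT p q r) : Fintype (IUL' ω) :=
  Fintype.ofFinite _

noncomputable instance {p q r : ℕ} (ω : MatT p q r) : Fintype (JUM ω) :=
  Fintype.ofFinite _

instance {p q r : ℕ} (ω : MatT p q r) : DecidableEq (IUL' ω) := by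
  unfold IUL'; infer_instance

instance {p q r : ℕ} (ω : MatT p q r) : DecidableEq (JUM ω) := by
  unfold JUM; infer_instance

/-- The matrix `ς`, indexed by `(I∪L') × (J∪M)`, with `ς_{i,j} = 1` iff `j ∈ J`
and `i = σ(j)`. -/
def sigMat {p q r : ℕ} (ω : MatT p q r) (σ : Fin q → Fin p) :
    Matrix (IUL' ω) (JUM ω) ℂ :=
  Matrix.of fun i j => if memJ ω j.1 ∧ i.1 = σ j.1 then 1 else 0

/-- The space `Γ`: matrices `γ` indexed by `(J∪M) × (I∪L')` such that `ςγ` and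
`γς` are strictly upper triangular for the natural integer order. -/
def GammaSet {p q r : ℕ} (ω : MatT p q r) (σ : Fin q → Fin p) :
    Set (Matrix (JUM ω) (IUL' ω) ℂ) :=
  {γ | (∀ i i' : IUL' ω, i'.1 ≤ i.1 → (sigMat ω σ * γ) i i' = 0) ∧
       (∀ j j' : JUM ω, j'.1 ≤ j.1 → (γ * sigMat ω σ) j j' = 0)}

/-- The subset `R = {-t,…,-1} ∪ I ∪ L'` of `ℤ` (elements of `I, L'` identified
with their 1-based labels in `{1,…,p}`). -/
def Rfin {p q r : ℕ} (ω : MatT p q r) (t : ℕ) : Finset ℤ :=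
  (Finset.univ.image fun i : Fin t => -((i : ℤ) + 1)) ∪
  ((Finset.univ.filter fun i : Fin p => memI ω i ∨ memL' ω i).image
    fun i => ((i : ℕ) : ℤ) + 1)

/-- The subset `S = J ∪ M ∪ {q+1,…,q+s'}` of `ℤ` (elements of `J, M` identified
with their 1-based labels in `{1,…,q}`). -/
def Sfin {p q r : ℕ} (ω : MatT p q r) (s' : ℕ) : Finset ℤ :=
  ((Finset.univ.filter fun j : Fin q => memJ ω j ∨ memM ω j).image
    fun j => ((j : ℕ) : ℤ) + 1) ∪
  (Finset.univ.image fun i : Fin s' => (q : ℤ) + (i : ℤ) + 1)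

/-- The extension-by-zero map `η₂` from `(J∪M) × (I∪L')`-matrices to
`S × R`-matrices. -/
def eta2 {p q r : ℕ} (ω : MatT p q r) (t s' : ℕ) (γ : Matrix (JUM ω) (IUL' ω) ℂ) :
    Matrix {x // x ∈ Sfin ω s'} {x // x ∈ Rfin ω t} ℂ :=
  Matrix.of fun sI rI => ∑ j : JUM ω, ∑ i : IUL' ω,
    if (sI : ℤ) = ((j.1 : ℕ) : ℤ) + 1 ∧ (rI : ℤ) = ((i.1 : ℕ) : ℤ) + 1
    then γ j i else 0


section Aux
variable {p q r : ℕ} (ω : MatT p q r)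

def toS (s' : ℕ) (j : JUM ω) : {x // x ∈ Sfin ω s'} :=
  ⟨((j.1 : ℕ) : ℤ) + 1, by
    simp only [Sfin, Finset.mem_union]
    refine Or.inl ?_
    simp
    exact ⟨j.1, j.2, rfl⟩⟩

def toR (t : ℕ) (i : IUL' ω) : {x // x ∈ Rfin ω t} :=
  ⟨((i.1 : ℕ) : ℤ) + 1, by
    simp only [Rfin, Finset.mem_union]
    refine Or.inr ?_
    simp
    exact ⟨i.1, i.2, rfl⟩⟩

lemma decodeS (s' : ℕ) (ς : {x // x ∈ Sfin ω s'}) :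
    (∃ j : JUM ω, ς = toS ω s' j) ∨ (∃ a : Fin s', (ς : ℤ) = (q : ℤ) + (a : ℤ) + 1) := by
  have h := ς.2
  simp [Sfin] at h
  rcases h with h | h
  · obtain ⟨j, hj, hje⟩ := h
    refine Or.inl ⟨⟨j, hj⟩, Subtype.ext ?_⟩
    simp only [toS]
    push_cast at hje ⊢
    omega
  · obtain ⟨a, ha⟩ := h
    exact Or.inr ⟨a, by omega⟩

lemma decodeR (t : ℕ) (ρ : {x // x ∈ Rfin ω t}) :
    (∃ a : Fin t, (ρ : ℤ) = -((a : ℤ) + 1)) ∨ (∃ i : IUL' ω, ρ = toR ω t i) := by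
  have h := ρ.2
  simp [Rfin] at h
  rcases h with h | h
  · obtain ⟨a, ha⟩ := h
    exact Or.inl ⟨a, by omega⟩
  · obtain ⟨i, hi, hie⟩ := h
    refine Or.inr ⟨⟨i, hi⟩, Subtype.ext ?_⟩
    simp only [toR]
    push_cast at hie ⊢
    omega

lemma toS_inj {s' : ℕ} {j j' : JUM ω} (h : toS ω s' j = toS ω s' j') : j = j' := by
  have h1 : ((j.1 : ℕ) : ℤ) + 1 = ((j'.1 : ℕ) : ℤ) + 1 := congrArg Subtype.val h
  exact Subtype.ext (Fin.ext (by omega))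

lemma toR_inj {t : ℕ} {i i' : IUL' ω} (h : toR ω t i = toR ω t i') : i = i' := by
  have h1 : ((i.1 : ℕ) : ℤ) + 1 = ((i'.1 : ℕ) : ℤ) + 1 := congrArg Subtype.val h
  exact Subtype.ext (Fin.ext (by omega))

lemma eta2_apply (t s' : ℕ) (γ : Matrix (JUM ω) (IUL' ω) ℂ) (j : JUM ω) (i : IUL' ω) :
    eta2 ω t s' γ (toS ω s' j) (toR ω t i) = γ j i := by
  show (∑ j' : JUM ω, ∑ i' : IUL' ω,
    if (((j.1 : ℕ) : ℤ) + 1 = ((j'.1 : ℕ) : ℤ) + 1 ∧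
        ((i.1 : ℕ) : ℤ) + 1 = ((i'.1 : ℕ) : ℤ) + 1) then γ j' i' else 0) = γ j i
  rw [Fintype.sum_eq_single j]
  · rw [Fintype.sum_eq_single i]
    · simp
    · intro i' hi'
      rw [if_neg]
      rintro ⟨-, h2⟩
      exact hi' (Subtype.ext (Fin.ext (by omega))).symm
  · intro j' hj'
    apply Finset.sum_eq_zero
    intro i' _
    rw [if_neg]
    rintro ⟨h1, -⟩
    exact hj' (Subtype.ext (Fin.ext (by omega))).symm

lemma eta2_row_zero (t s' : ℕ) (γ : Matrix (JUM ω) (IUL' ω) ℂ)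
    (ς : {x // x ∈ Sfin ω s'}) (ρ : {x // x ∈ Rfin ω t})
    (hς : ∀ j : JUM ω, (ς : ℤ) ≠ ((j.1 : ℕ) : ℤ) + 1) :
    eta2 ω t s' γ ς ρ = 0 := by
  apply Finset.sum_eq_zero; intro j _
  apply Finset.sum_eq_zero; intro i _
  rw [if_neg]; rintro ⟨h1, -⟩; exact hς j h1

lemma eta2_col_zero (t s' : ℕ) (γ : Matrix (JUM ω) (IUL' ω) ℂ)
    (ς : {x // x ∈ Sfin ω s'}) (ρ : {x // x ∈ Rfin ω t})
    (hρ : ∀ i : IUL' ω, (ρ : ℤ) ≠ ((i.1 : ℕ) : ℤ) + 1) :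
    eta2 ω t s' γ ς ρ = 0 := by
  apply Finset.sum_eq_zero; intro j _
  apply Finset.sum_eq_zero; intro i _
  rw [if_neg]; rintro ⟨-, h2⟩; exact hρ i h2

end Aux
/-- `η₂` restricts to a linear bijection from `Γ` onto
`Z = {z : P_w z and z P_w strictly upper triangular}`, compatible with the
products `(γς)^ℓ γ ↦ (z P_w)^ℓ z`. -/
theorem eta2_bijection (p q r : ℕ) (hr : r ≤ p + q)
    (ω : MatT p q r) (hω : InT ω) (σ : Fin q → Fin p)
    (hσ : ∀ j, memJ ω j → ∃ c, ω (Sum.inl (σ j)) c = 1 ∧ ω (Sum.inr j) c = 1)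
    (t s' : ℕ)
    (ht : t = Nat.card {j : Fin q // memM ω j})
    (hs' : s' = Nat.card {i : Fin p // memL' ω i})
    (mE : Fin t → Fin q) (hmE : StrictMono mE) (hmEr : ∀ j, memM ω j ↔ ∃ a, mE a = j)
    (lE : Fin s' → Fin p) (hlE : StrictMono lE)
    (hlEr : ∀ i, memL' ω i ↔ ∃ a, lE a = i)
    (w : {x // x ∈ Sfin ω s'} → {x // x ∈ Rfin ω t})
    (hwbij : Function.Bijective w)
    (hwM : ∀ (sI : {x // x ∈ Sfin ω s'}) (i : Fin t),
      (sI : ℤ) = ((mE i : ℕ) : ℤ) + 1 → ((w sI : ℤ) = -((i : ℤ) + 1)))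
    (hwJ : ∀ (sI : {x // x ∈ Sfin ω s'}) (j : Fin q), memJ ω j →
      (sI : ℤ) = ((j : ℕ) : ℤ) + 1 → ((w sI : ℤ) = ((σ j : ℕ) : ℤ) + 1))
    (hwL : ∀ (sI : {x // x ∈ Sfin ω s'}) (i : Fin s'),
      (sI : ℤ) = (q : ℤ) + (i : ℤ) + 1 →
      ((w sI : ℤ) = ((lE ⟨s' - 1 - (i : ℕ), by have := i.isLt; omega⟩ : ℕ) : ℤ) + 1))
    (Pw : Matrix {x // x ∈ Rfin ω t} {x // x ∈ Sfin ω s'} ℂ)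
    (hPw : ∀ ρ ς, Pw ρ ς = if (ρ : ℤ) = (w ς : ℤ) then 1 else 0)
    (Zset : Set (Matrix {x // x ∈ Sfin ω s'} {x // x ∈ Rfin ω t} ℂ))
    (hZ : Zset = {z |
      (∀ ρ ρ' : {x // x ∈ Rfin ω t}, (ρ' : ℤ) ≤ (ρ : ℤ) → (Pw * z) ρ ρ' = 0) ∧
      (∀ ς ς' : {x // x ∈ Sfin ω s'}, (ς' : ℤ) ≤ (ς : ℤ) → (z * Pw) ς ς' = 0)}) :
    (∀ γ γ' : Matrix (JUM ω) (IUL' ω) ℂ,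
      eta2 ω t s' (γ + γ') = eta2 ω t s' γ + eta2 ω t s' γ') ∧
    (∀ (z : ℂ) (γ : Matrix (JUM ω) (IUL' ω) ℂ),
      eta2 ω t s' (z • γ) = z • eta2 ω t s' γ) ∧
    Set.BijOn (eta2 ω t s') (GammaSet ω σ) Zset ∧
    (∀ γ ∈ GammaSet ω σ, ∀ l : ℕ,
      eta2 ω t s' ((γ * sigMat ω σ) ^ l * γ) =
        (eta2 ω t s' γ * Pw) ^ l * eta2 ω t s' γ) := by
  obtain ⟨hrank, hτ1, hτ2⟩ := hω
  obtain ⟨hτ1v, hτ1r, hτ1c⟩ := hτ1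
  obtain ⟨hτ2v, hτ2r, hτ2c⟩ := hτ2
  simp only [Matrix.of_apply] at hτ1v hτ1r hτ1c hτ2v hτ2r hτ2c
  -- basic combinatorial facts
  have hσI : ∀ j, memJ ω j → memI ω (σ j) := by
    intro j hJ
    obtain ⟨c, h1, h2⟩ := hσ j hJ
    exact ⟨c, h1, j, h2⟩
  have hσinj : ∀ j j', memJ ω j → memJ ω j' → σ j = σ j' → j = j' := by
    intro j j' hJ hJ' he
    obtain ⟨c, a1, a2⟩ := hσ j hJ
    obtain ⟨c', b1, b2⟩ := hσ j' hJ'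
    have hcc : c = c' := hτ1r (σ j) c c' a1 (by rw [he]; exact b1)
    exact hτ2c j j' c a2 (by rw [hcc]; exact b2)
  have hIJ : ∀ i, memI ω i → ∃ j, memJ ω j ∧ σ j = i := by
    intro i hI
    obtain ⟨c, h1, j, h2⟩ := hI
    have hJ : memJ ω j := ⟨c, h2, i, h1⟩
    refine ⟨j, hJ, ?_⟩
    obtain ⟨c', k1, k2⟩ := hσ j hJ
    have hcc : c' = c := hτ2r j c' c k2 h2
    exact hτ1c (σ j) i c (by rw [← hcc]; exact k1) h1
  -- w bijection as an Equiv
  set wE := Equiv.ofBijective w hwbij with hwE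
  -- values of w
  have hwJ' : ∀ (j : JUM ω) (hJ : memJ ω j.1),
      w (toS ω s' j) = toR ω t ⟨σ j.1, Or.inl (hσI _ hJ)⟩ :=
    fun j hJ => Subtype.ext (hwJ _ _ hJ rfl)
  have hwM' : ∀ (j : JUM ω) (a : Fin t), j.1 = mE a →
      (w (toS ω s' j) : ℤ) = -((a : ℤ) + 1) :=
    fun j a h => hwM _ a (by simp [toS, h])
  -- matrix product helpers
  have hzPw : ∀ (z : Matrix {x // x ∈ Sfin ω s'} {x // x ∈ Rfin ω t} ℂ) ς ς',
      (z * Pw) ς ς' = z ς (w ς') := by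
    intro z ς ς'
    rw [Matrix.mul_apply, Fintype.sum_eq_single (w ς')]
    · rw [hPw, if_pos rfl, mul_one]
    · intro ρ hρ
      rw [hPw, if_neg (fun hh => hρ (Subtype.ext hh)), mul_zero]
  have hPwz : ∀ (z : Matrix {x // x ∈ Sfin ω s'} {x // x ∈ Rfin ω t} ℂ) ρ ρ',
      (Pw * z) ρ ρ' = z (wE.symm ρ) ρ' := by
    intro z ρ ρ'
    rw [Matrix.mul_apply, Fintype.sum_eq_single (wE.symm ρ)]
    · rw [hPw]
      have : w (wE.symm ρ) = ρ := wE.apply_symm_apply ρ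
      rw [if_pos (by rw [this]), one_mul]
    · intro ς hς
      rw [hPw, if_neg, zero_mul]
      intro hh
      have h2 : ρ = w ς := Subtype.ext hh
      have h3 : wE.symm (w ς) = ς := wE.symm_apply_apply ς
      exact hς (by rw [h2, h3])
  -- membership in Zset, characterized pointwise
  have hZmem : ∀ z, z ∈ Zset ↔
      ((∀ (ς : {x // x ∈ Sfin ω s'}) (ρ' : {x // x ∈ Rfin ω t}),
          (ρ' : ℤ) ≤ ((w ς : ℤ)) → z ς ρ' = 0) ∧
       (∀ ς ς' : {x // x ∈ Sfin ω s'}, (ς' : ℤ) ≤ (ς : ℤ) → z ς (w ς') = 0)) := by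
    intro z
    rw [hZ]
    constructor
    · rintro ⟨h1, h2⟩
      refine ⟨fun ς ρ' hle => ?_, fun ς ς' hle => ?_⟩
      · have := h1 (w ς) ρ' hle
        rw [hPwz] at this
        have h3 : wE.symm (w ς) = ς := wE.symm_apply_apply ς
        rwa [h3] at this
      · have := h2 ς ς' hle
        rwa [hzPw] at this
    · rintro ⟨h1, h2⟩
      refine ⟨fun ρ ρ' hle => ?_, fun ς ς' hle => ?_⟩
      · rw [hPwz]
        refine h1 _ _ ?_
        have : w (wE.symm ρ) = ρ := wE.apply_symm_apply ρ
        rw [this]; exact hle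
      · rw [hzPw]; exact h2 _ _ hle
  -- collapses of products with sigMat
  have hSG : ∀ (γ : Matrix (JUM ω) (IUL' ω) ℂ) (j : JUM ω) (hJ : memJ ω j.1) (i' : IUL' ω),
      (sigMat ω σ * γ) ⟨σ j.1, Or.inl (hσI _ hJ)⟩ i' = γ j i' := by
    intro γ j hJ i'
    erw [Matrix.mul_apply, Fintype.sum_eq_single j]
    · rw [show sigMat ω σ ⟨σ j.1, Or.inl (hσI _ hJ)⟩ j = 1 from if_pos ⟨hJ, rfl⟩, one_mul]
    · intro j' hj'
      rw [show sigMat ω σ ⟨σ j.1, Or.inl (hσI _ hJ)⟩ j' = 0 from ?_, zero_mul]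
      erw [sigMat, Matrix.of_apply, if_neg]
      rintro ⟨hJ', he⟩
      exact hj' (Subtype.ext (hσinj j'.1 j.1 hJ' hJ he.symm))
  have hGS : ∀ (γ : Matrix (JUM ω) (IUL' ω) ℂ) (j j' : JUM ω) (hJ' : memJ ω j'.1),
      (γ * sigMat ω σ) j j' = γ j ⟨σ j'.1, Or.inl (hσI _ hJ')⟩ := by
    intro γ j j' hJ'
    rw [Matrix.mul_apply]
    have hcol := Fintype.sum_eq_single (f := fun i : IUL' ω => γ j i * sigMat ω σ i j')
      (⟨σ j'.1, Or.inl (hσI _ hJ')⟩ : IUL' ω) ?_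
    · refine hcol.trans ?_
      rw [show sigMat ω σ ⟨σ j'.1, Or.inl (hσI _ hJ')⟩ j' = 1 from if_pos ⟨hJ', rfl⟩, mul_one]
    · intro i hi
      show γ j i * sigMat ω σ i j' = 0
      rw [show sigMat ω σ i j' = 0 from ?_, mul_zero]
      rw [sigMat, Matrix.of_apply, if_neg]
      rintro ⟨-, he⟩
      exact hi (Subtype.ext he)
  have hGS0 : ∀ (γ : Matrix (JUM ω) (IUL' ω) ℂ) (j j' : JUM ω), ¬ memJ ω j'.1 →
      (γ * sigMat ω σ) j j' = 0 := by
    intro γ j j' hJ'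
    rw [Matrix.mul_apply]
    apply Finset.sum_eq_zero
    intro i _
    rw [show sigMat ω σ i j' = 0 from ?_, mul_zero]
    rw [sigMat, Matrix.of_apply, if_neg]
    rintro ⟨hJ'', -⟩
    exact hJ' hJ''
  -- MapsTo
  have hMaps : ∀ γ ∈ GammaSet ω σ, eta2 ω t s' γ ∈ Zset := by
    intro γ hγ
    obtain ⟨hg1, hg2⟩ := hγ
    rw [hZmem]
    constructor
    · -- C1
      intro ς ρ' hle
      rcases decodeS ω s' ς with ⟨j, rfl⟩ | ⟨a, ha⟩
      · rcases j.2 with hJ | hM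
        · rw [hwJ' j hJ] at hle
          rcases decodeR ω t ρ' with ⟨b, hb⟩ | ⟨i', rfl⟩
          · apply eta2_col_zero
            intro i hi
            have := i.1.2
            omega
          · rw [eta2_apply]
            have hle' : (i'.1 : ℕ) ≤ (σ j.1 : ℕ) := by
              have h1 : (toR ω t i' : ℤ) = ((i'.1 : ℕ) : ℤ) + 1 := rfl
              have h2 : ((toR ω t ⟨σ j.1, Or.inl (hσI _ hJ)⟩ : ℤ)) = ((σ j.1 : ℕ) : ℤ) + 1 := rfl
              omega
            have := hg1 ⟨σ j.1, Or.inl (hσI _ hJ)⟩ i' hle'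
            rwa [hSG γ j hJ i'] at this
        · obtain ⟨a, haM⟩ := (hmEr j.1).1 hM
          have hwv : (w (toS ω s' j) : ℤ) = -((a : ℤ) + 1) := hwM' j a haM.symm
          apply eta2_col_zero
          intro i hi
          rw [hwv] at hle
          have : (0 : ℤ) ≤ ((i.1 : ℕ) : ℤ) := Int.ofNat_nonneg _
          omega
      · apply eta2_row_zero
        intro j hj
        have := j.1.2
        omega
    · -- C2
      intro ς ς' hle
      rcases decodeS ω s' ς with ⟨j, rfl⟩ | ⟨a, ha⟩
      · rcases decodeS ω s' ς' with ⟨j', rfl⟩ | ⟨a', ha'⟩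
        · rcases j'.2 with hJ' | hM'
          · erw [hwJ' j' hJ', eta2_apply]
            have hle' : (j'.1 : ℕ) ≤ (j.1 : ℕ) := by
              have h1 : (toS ω s' j : ℤ) = ((j.1 : ℕ) : ℤ) + 1 := rfl
              have h2 : (toS ω s' j' : ℤ) = ((j'.1 : ℕ) : ℤ) + 1 := rfl
              omega
            have := hg2 j j' hle'
            rwa [hGS γ j j' hJ'] at this
          · obtain ⟨a, haM⟩ := (hmEr j'.1).1 hM'
            have hwv : (w (toS ω s' j') : ℤ) = -((a : ℤ) + 1) := hwM' j' a haM.symm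
            apply eta2_col_zero
            intro i hi
            have : (0 : ℤ) ≤ ((i.1 : ℕ) : ℤ) := Int.ofNat_nonneg _
            omega
        · exfalso
          have h1 : (toS ω s' j : ℤ) = ((j.1 : ℕ) : ℤ) + 1 := rfl
          have h2 := j.1.2
          omega
      · apply eta2_row_zero
        intro j hj
        have := j.1.2
        omega
  -- injectivity of eta2
  have hInj : Function.Injective (eta2 ω t s') := by
    intro γ γ' h
    ext j i
    have h2 := congrArg (fun m => m (toS ω s' j) (toR ω t i)) h
    simpa only [eta2_apply] using h2
  -- surjectivity onto Zset
  have hSurj : ∀ z ∈ Zset, ∃ γ ∈ GammaSet ω σ, eta2 ω t s' γ = z := by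
    intro z hz
    rw [hZmem] at hz
    obtain ⟨hC1, hC2⟩ := hz
    refine ⟨Matrix.of (fun j i => z (toS ω s' j) (toR ω t i)), ⟨?_, ?_⟩, ?_⟩
    · -- sigMat * γ₀ strictly upper triangular
      intro i i' hle
      rw [Matrix.mul_apply]
      apply Finset.sum_eq_zero
      intro j _
      by_cases hc : memJ ω j.1 ∧ i.1 = σ j.1
      · rw [show sigMat ω σ i j = 1 from if_pos hc, one_mul]
        show z (toS ω s' j) (toR ω t i') = 0
        apply hC1
        rw [hwJ' j hc.1]
        show ((i'.1 : ℕ) : ℤ) + 1 ≤ ((σ j.1 : ℕ) : ℤ) + 1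
        have h1 : (i'.1 : ℕ) ≤ (i.1 : ℕ) := hle
        have h2 : (i.1 : ℕ) = ((σ j.1 : Fin p) : ℕ) := congrArg Fin.val hc.2
        omega
      · rw [show sigMat ω σ i j = 0 from if_neg hc, zero_mul]
    · -- γ₀ * sigMat strictly upper triangular
      intro j j' hle
      by_cases hJ' : memJ ω j'.1
      · rw [hGS _ j j' hJ']
        show z (toS ω s' j) (toR ω t ⟨σ j'.1, Or.inl (hσI _ hJ')⟩) = 0
        rw [← hwJ' j' hJ']
        apply hC2
        show ((j'.1 : ℕ) : ℤ) + 1 ≤ ((j.1 : ℕ) : ℤ) + 1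
        have h1 : (j'.1 : ℕ) ≤ (j.1 : ℕ) := hle
        omega
      · exact hGS0 _ j j' hJ'
    · -- eta2 γ₀ = z
      ext ς ρ
      rcases decodeS ω s' ς with ⟨j, rfl⟩ | ⟨a, ha⟩
      · rcases decodeR ω t ρ with ⟨b, hb⟩ | ⟨i, rfl⟩
        · rw [eta2_col_zero ω t s' _ _ _ (fun i _ => by have : (0:ℤ) ≤ ((i.1:ℕ):ℤ) := Int.ofNat_nonneg _; omega)]
          symm
          rcases j.2 with hJ | hM
          · apply hC1
            rw [hwJ' j hJ]
            show (ρ : ℤ) ≤ ((σ j.1 : ℕ) : ℤ) + 1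
            have : (0:ℤ) ≤ ((σ j.1 : ℕ) : ℤ) := Int.ofNat_nonneg _
            omega
          · obtain ⟨a, haM⟩ := (hmEr j.1).1 hM
            by_cases hba : (b : ℕ) ≤ (a : ℕ)
            · have hMb : memM ω (mE b) := (hmEr _).2 ⟨b, rfl⟩
              have h1 : w (toS ω s' ⟨mE b, Or.inr hMb⟩) = ρ := Subtype.ext (by
                rw [hwM' ⟨mE b, Or.inr hMb⟩ b rfl, hb])
              rw [← h1]
              apply hC2
              show ((mE b : ℕ) : ℤ) + 1 ≤ ((j.1 : ℕ) : ℤ) + 1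
              have h2 : mE b ≤ mE a := hmE.le_iff_le.mpr hba
              have h3 : (mE b : ℕ) ≤ (mE a : ℕ) := h2
              have h4 : ((mE a : Fin q) : ℕ) = (j.1 : ℕ) := congrArg Fin.val haM
              omega
            · apply hC1
              have hwv : (w (toS ω s' j) : ℤ) = -((a : ℤ) + 1) := hwM' j a haM.symm
              rw [hwv, hb]
              omega
        · rw [eta2_apply]
          rfl
      · rw [eta2_row_zero ω t s' _ _ _ (fun j' _ => by have := j'.1.2; omega)]
        symm
        rcases decodeR ω t ρ with ⟨b, hb⟩ | ⟨i, rfl⟩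
        · have hMb : memM ω (mE b) := (hmEr _).2 ⟨b, rfl⟩
          have h1 : w (toS ω s' ⟨mE b, Or.inr hMb⟩) = ρ := Subtype.ext (by
            rw [hwM' ⟨mE b, Or.inr hMb⟩ b rfl, hb])
          rw [← h1]
          apply hC2
          show ((mE b : ℕ) : ℤ) + 1 ≤ (ς : ℤ)
          have := (mE b).2
          omega
        · rcases i.2 with hI | hL'
          · obtain ⟨j, hJ, hji⟩ := hIJ i.1 hI
            have h1 : w (toS ω s' ⟨j, Or.inl hJ⟩) = toR ω t i := by
              rw [hwJ' ⟨j, Or.inl hJ⟩ hJ]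
              exact congrArg (toR ω t) (Subtype.ext hji)
            rw [← h1]
            apply hC2
            show ((j : ℕ) : ℤ) + 1 ≤ (ς : ℤ)
            have := j.2
            omega
          · obtain ⟨b, hbi⟩ := (hlEr i.1).1 hL'
            have hlEval : ∀ d : Fin s', (d : ℕ) = (b : ℕ) →
                ((lE d : ℕ) : ℤ) + 1 = ((i.1 : ℕ) : ℤ) + 1 := by
              intro d hd
              rw [show d = b from Fin.ext hd, hbi]
            by_cases hba : s' - 1 - (a : ℕ) ≤ (b : ℕ)
            · have hcl : s' - 1 - (b : ℕ) < s' := by have := b.2; omega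
              have hmem : ((q : ℤ) + ((s' - 1 - (b : ℕ) : ℕ) : ℤ) + 1) ∈ Sfin ω s' := by
                simp only [Sfin, Finset.mem_union]
                right
                simp
                exact ⟨⟨s' - 1 - (b : ℕ), hcl⟩, by push_cast; ring⟩
              set ς' : {x // x ∈ Sfin ω s'} := ⟨(q : ℤ) + ((s' - 1 - (b : ℕ) : ℕ) : ℤ) + 1, hmem⟩ with hςdef
              have hwv := hwL ς' ⟨s' - 1 - (b : ℕ), hcl⟩ (by push_cast; ring)
              have h1 : w ς' = toR ω t i := Subtype.ext (by
                rw [hwv]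
                exact hlEval _ (by show s' - 1 - (s' - 1 - (b:ℕ)) = (b:ℕ); have := b.2; omega))
              rw [← h1]
              apply hC2
              show (q : ℤ) + ((s' - 1 - (b : ℕ) : ℕ) : ℤ) + 1 ≤ (ς : ℤ)
              have := b.2
              have h5 : ((s' - 1 - (b : ℕ) : ℕ) : ℤ) ≤ (a : ℕ) := by omega
              omega
            · apply hC1
              have hwv := hwL ς a ha
              rw [hwv]
              have hkey : ∀ d : Fin s', (b : ℕ) < (d : ℕ) →
                  (toR ω t i : ℤ) ≤ ((lE d : ℕ) : ℤ) + 1 := by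
                intro d hd
                have h2 : lE b < lE d := hlE hd
                have h3 : (lE b : ℕ) < (lE d : ℕ) := h2
                have h4 : ((lE b : Fin p) : ℕ) = (i.1 : ℕ) := congrArg Fin.val hbi
                show ((i.1 : ℕ) : ℤ) + 1 ≤ ((lE d : ℕ) : ℤ) + 1
                omega
              exact hkey _ (by show (b : ℕ) < s' - 1 - (a : ℕ); omega)
  -- additivity
  have hadd : ∀ γ γ' : Matrix (JUM ω) (IUL' ω) ℂ,
      eta2 ω t s' (γ + γ') = eta2 ω t s' γ + eta2 ω t s' γ' := by
    intro γ γ'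
    ext ς ρ
    simp only [eta2, Matrix.of_apply, Matrix.add_apply]
    rw [← Finset.sum_add_distrib]
    refine Finset.sum_congr rfl fun j _ => ?_
    rw [← Finset.sum_add_distrib]
    refine Finset.sum_congr rfl fun i _ => ?_
    split <;> simp
  have hsmul : ∀ (c : ℂ) (γ : Matrix (JUM ω) (IUL' ω) ℂ),
      eta2 ω t s' (c • γ) = c • eta2 ω t s' γ := by
    intro c γ
    ext ς ρ
    simp only [eta2, Matrix.of_apply, Matrix.smul_apply, smul_eq_mul, Finset.mul_sum]
    refine Finset.sum_congr rfl fun j _ => ?_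
    refine Finset.sum_congr rfl fun i _ => ?_
    split <;> simp
  -- key product compatibility
  have keyA : ∀ γ δ : Matrix (JUM ω) (IUL' ω) ℂ,
      eta2 ω t s' γ * Pw * eta2 ω t s' δ = eta2 ω t s' (γ * sigMat ω σ * δ) := by
    intro γ δ
    ext ς ρ
    rw [Matrix.mul_apply]
    simp only [hzPw]
    rcases decodeS ω s' ς with ⟨j, rfl⟩ | ⟨a, ha⟩
    swap
    · rw [eta2_row_zero ω t s' _ _ _ (fun j' _ => by have := j'.1.2; omega)]
      apply Finset.sum_eq_zero
      intro ς' _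
      rw [eta2_row_zero ω t s' γ _ _ (fun j' _ => by have := j'.1.2; omega), zero_mul]
    rcases decodeR ω t ρ with ⟨b, hb⟩ | ⟨i, rfl⟩
    · rw [eta2_col_zero ω t s' _ _ _ (fun i _ => by have : (0:ℤ) ≤ ((i.1:ℕ):ℤ) := Int.ofNat_nonneg _; omega)]
      apply Finset.sum_eq_zero
      intro ς' _
      rw [eta2_col_zero ω t s' δ _ _ (fun i _ => by have : (0:ℤ) ≤ ((i.1:ℕ):ℤ) := Int.ofNat_nonneg _; omega), mul_zero]
    · rw [eta2_apply, Matrix.mul_apply]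
      refine Eq.symm (Finset.sum_of_injOn (toS ω s') (fun x _ y _ h => toS_inj ω h)
        (fun x _ => Finset.mem_coe.mpr (Finset.mem_univ _)) ?_ ?_)
      · intro ς' _ hns
        rw [eta2_row_zero ω t s' δ ς' _ ?_, mul_zero]
        intro j' hj'
        exact hns ⟨j', Finset.mem_coe.mpr (Finset.mem_univ j'), Subtype.ext hj'.symm⟩
      · intro j' _
        by_cases hJ' : memJ ω j'.1
        · erw [hwJ' j' hJ', eta2_apply, eta2_apply, hGS γ j j' hJ']
        · obtain ⟨a', haM⟩ := (hmEr j'.1).1 (j'.2.resolve_left hJ')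
          rw [hGS0 γ j j' hJ', zero_mul,
            eta2_col_zero ω t s' γ _ _ (fun i'' hi'' => by
              have hwv : (w (toS ω s' j') : ℤ) = -((a' : ℤ) + 1) := hwM' j' a' haM.symm
              have : (0:ℤ) ≤ ((i''.1:ℕ):ℤ) := Int.ofNat_nonneg _
              omega), zero_mul]
  have hprod : ∀ (γ : Matrix (JUM ω) (IUL' ω) ℂ) (l : ℕ),
      eta2 ω t s' ((γ * sigMat ω σ) ^ l * γ) = (eta2 ω t s' γ * Pw) ^ l * eta2 ω t s' γ := by
    intro γ l
    induction l with
    | zero => simp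
    | succ n ih =>
      calc eta2 ω t s' ((γ * sigMat ω σ) ^ (n + 1) * γ)
          = eta2 ω t s' (γ * sigMat ω σ * ((γ * sigMat ω σ) ^ n * γ)) := by
            rw [pow_succ', Matrix.mul_assoc]
        _ = eta2 ω t s' γ * Pw * eta2 ω t s' ((γ * sigMat ω σ) ^ n * γ) := (keyA _ _).symm
        _ = eta2 ω t s' γ * Pw * ((eta2 ω t s' γ * Pw) ^ n * eta2 ω t s' γ) := by rw [ih]
        _ = (eta2 ω t s' γ * Pw) ^ (n + 1) * eta2 ω t s' γ := by
            rw [pow_succ']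
            simp only [Matrix.mul_assoc]
  refine ⟨hadd, hsmul, ⟨fun γ hγ => hMaps γ hγ, fun γ _ γ' _ h => hInj h, fun z hz => ?_⟩,
    fun γ _ l => hprod γ l⟩
  obtain ⟨γ, hγ, he⟩ := hSurj z hz
  exact ⟨γ, hγ, he⟩
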